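/- Let d>0 and b>0. The set Γ = {(r,z) ∈ ℝ² : −1 + 2br/(d+1) + z² = 0} is invariant for the planar system dr/dt = −2 d r z, dz/dt = −1 + 2 b r + z²; moreover every point of Γ with |z|<1 lies on the heteroclinic orbit t ↦ (R₀(t), Z₀(t)) with R₀(t) = ((d+1)/(2b))·cosh⁻²(d t), Z₀(t) = tanh(d t), which connects the equilibria (0,1) and (0,−1): lim_{t→±∞}(R₀(t),Z₀(t)) = (0,±1). -/

import Mathlib

open Filter Real

lemma tanh_eq' (x : ℝ) : Real.tanh x = (1 - Real.exp (-2*x)) / (1 + Real.exp (-2*x)) := by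
  rw [Real.tanh_eq_sinh_div_cosh, Real.sinh_eq, Real.cosh_eq]
  have h1 : Real.exp x ≠ 0 := Real.exp_ne_zero x
  have h3 : Real.exp (-2*x) = Real.exp (-x) * Real.exp (-x) := by
    rw [← Real.exp_add]; ring_nf
  have h4 : Real.exp (-x) = (Real.exp x)⁻¹ := by rw [← Real.exp_neg]
  rw [h3, h4]
  have h5 : (0:ℝ) < Real.exp x + (Real.exp x)⁻¹ := by positivity
  field_simp

lemma tanh_tendsto_atTop' : Tendsto Real.tanh atTop (nhds 1) := by
  have h2 : Tendsto (fun x : ℝ => -2*x) atTop atBot := by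
    have : Tendsto (fun x : ℝ => -(2*x)) atTop atBot :=
      tendsto_neg_atBot_iff.mpr (tendsto_id.const_mul_atTop (by norm_num))
    simpa [neg_mul] using this
  have h : Tendsto (fun x : ℝ => Real.exp (-2*x)) atTop (nhds 0) :=
    Real.tendsto_exp_atBot.comp h2
  have := Tendsto.div ((tendsto_const_nhds : Tendsto (fun _ : ℝ => (1:ℝ)) atTop (nhds 1)).sub h)
    ((tendsto_const_nhds : Tendsto (fun _ : ℝ => (1:ℝ)) atTop (nhds 1)).add h) (by norm_num)
  simp only [sub_zero, add_zero, div_one] at this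
  apply this.congr
  intro x
  simp [Pi.div_apply, tanh_eq']

lemma tanh_tendsto_atBot' : Tendsto Real.tanh atBot (nhds (-1)) := by
  have : Tendsto (fun x : ℝ => -Real.tanh (-x)) atBot (nhds (-1)) := by
    have := tanh_tendsto_atTop'.comp tendsto_neg_atBot_atTop
    simpa using this.neg
  simpa [Real.tanh_neg] using this

lemma cosh_inv_sq (x : ℝ) : (Real.cosh x)⁻¹ ^ 2 = 1 - Real.tanh x ^ 2 := by
  have hc : Real.cosh x ≠ 0 := (Real.cosh_pos x).ne'
  rw [Real.tanh_eq_sinh_div_cosh, div_pow]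
  have := Real.cosh_sq_sub_sinh_sq x
  field_simp
  linarith

lemma tanh_arsinh (v : ℝ) : Real.tanh (Real.arsinh v) = v / Real.sqrt (1 + v ^ 2) := by
  rw [Real.tanh_eq_sinh_div_cosh, Real.sinh_arsinh, Real.cosh_arsinh]

/-- The set `Γ = {(r,z) : -1 + 2br/(d+1) + z² = 0}` is invariant for the planar system
`dr/dt = -2 d r z`, `dz/dt = -1 + 2br + z²`; every point of `Γ` with `|z| < 1` lies on the
heteroclinic orbit `t ↦ (R₀ t, Z₀ t)`, which connects the equilibria `(0,1)` and `(0,-1)`. -/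
theorem heteroclinic_manifold_invariant
    (d b : ℝ) (hd : 0 < d) (hb : 0 < b)
    (Γ : Set (ℝ × ℝ)) (hΓ : Γ = {p : ℝ × ℝ | -1 + 2 * b * p.1 / (d + 1) + p.2 ^ 2 = 0})
    (R₀ : ℝ → ℝ) (hR₀ : R₀ = fun t => ((d + 1) / (2 * b)) * (Real.cosh (d * t))⁻¹ ^ 2)
    (Z₀ : ℝ → ℝ) (hZ₀ : Z₀ = fun t => Real.tanh (d * t)) :
    (∀ r z : ℝ → ℝ,
      (∀ t, HasDerivAt r (-2 * d * r t * z t) t) →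
      (∀ t, HasDerivAt z (-1 + 2 * b * r t + (z t) ^ 2) t) →
      (r 0, z 0) ∈ Γ → ∀ t, (r t, z t) ∈ Γ) ∧
    (∀ p : ℝ × ℝ, p ∈ Γ → |p.2| < 1 → ∃ t : ℝ, p.1 = R₀ t ∧ p.2 = Z₀ t) ∧
    Tendsto (fun t => (R₀ t, Z₀ t)) atTop (nhds ((0 : ℝ), (1 : ℝ))) ∧
    Tendsto (fun t => (R₀ t, Z₀ t)) atBot (nhds ((0 : ℝ), (-1 : ℝ))) := by
  have hd1 : (0:ℝ) < d + 1 := by linarith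
  have hd1' : (d + 1 : ℝ) ≠ 0 := hd1.ne'
  have hd1'' : (1 + d : ℝ) ≠ 0 := by linarith
  have hb' : (2 * b : ℝ) ≠ 0 := by positivity
  subst hΓ hR₀ hZ₀
  refine ⟨?_, ?_, ?_, ?_⟩
  · -- invariance
    intro r z hr hz h0 t
    simp only [Set.mem_setOf_eq] at h0 ⊢
    set F : ℝ → ℝ := fun t => -1 + 2 * b / (d + 1) * r t + z t ^ 2 with hF
    have hF' : ∀ t, HasDerivAt F (2 * z t * F t) t := by
      intro t
      have h1 : HasDerivAt (fun t => 2 * b / (d + 1) * r t)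
          (2 * b / (d + 1) * (-2 * d * r t * z t)) t := (hr t).const_mul _
      have h2 : HasDerivAt (fun t => z t ^ 2)
          ((2 : ℕ) * z t ^ (1 : ℕ) * (-1 + 2 * b * r t + z t ^ 2)) t := (hz t).pow 2
      have key := ((hasDerivAt_const t (-1 : ℝ)).add h1).add h2
      refine key.congr_deriv ?_
      simp only [hF]
      field_simp
      ring
    have hzc : Continuous z :=
      continuous_iff_continuousAt.mpr fun t => (hz t).differentiableAt.continuousAt
    set W : ℝ → ℝ := fun t => ∫ s in (0:ℝ)..t, z s with hWdef
    have hW : ∀ t, HasDerivAt W (z t) t := fun t =>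
      (hzc.integral_hasStrictDerivAt 0 t).hasDerivAt
    set G : ℝ → ℝ := fun t => F t * Real.exp (-2 * W t) with hGdef
    have hG : ∀ t, HasDerivAt G 0 t := by
      intro t
      have he : HasDerivAt (fun t => Real.exp (-2 * W t))
          (Real.exp (-2 * W t) * (-2 * z t)) t := ((hW t).const_mul (-2)).exp
      have := (hF' t).mul he
      refine this.congr_deriv ?_
      ring
    have hconst : ∀ t, G t = G 0 := by
      intro t
      exact is_const_of_deriv_eq_zero
        (fun s => (hG s).differentiableAt) (fun s => (hG s).deriv) t 0
    have hF0 : F 0 = 0 := by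
      simp only [hF]
      field_simp at h0 ⊢
      linarith
    have hGt : G t = 0 := by rw [hconst t, hGdef]; simp [hF0]
    have hFt : F t = 0 := by
      have hne : Real.exp (-2 * W t) ≠ 0 := Real.exp_ne_zero _
      have := mul_eq_zero.mp hGt
      tauto
    simp only [hF] at hFt
    field_simp at hFt ⊢
    linarith
  · -- points on the orbit
    intro p hp hp2
    simp only [Set.mem_setOf_eq] at hp
    have hs2 : p.2 ^ 2 < 1 := by
      have h := abs_nonneg p.2
      have h2 := sq_abs p.2
      nlinarith [abs_lt.mp hp2]
    have h1ms : (0:ℝ) < 1 - p.2 ^ 2 := by linarith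
    have hsq : (0:ℝ) < Real.sqrt (1 - p.2 ^ 2) := Real.sqrt_pos.mpr h1ms
    set v : ℝ := p.2 / Real.sqrt (1 - p.2 ^ 2) with hv
    have hv2 : 1 + v ^ 2 = (1 - p.2 ^ 2)⁻¹ := by
      rw [hv, div_pow, Real.sq_sqrt h1ms.le]
      field_simp
      ring
    have hsv : Real.sqrt (1 + v ^ 2) = (Real.sqrt (1 - p.2 ^ 2))⁻¹ := by
      rw [hv2, Real.sqrt_inv]
    refine ⟨Real.arsinh v / d, ?_, ?_⟩
    · show p.1 = (d + 1) / (2 * b) * (Real.cosh (d * (Real.arsinh v / d)))⁻¹ ^ 2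
      have hdt : d * (Real.arsinh v / d) = Real.arsinh v := by field_simp
      rw [hdt, cosh_inv_sq, _root_.tanh_arsinh, hsv, hv]
      have hcan : p.2 / Real.sqrt (1 - p.2 ^ 2) / (Real.sqrt (1 - p.2 ^ 2))⁻¹ = p.2 := by
        field_simp
      rw [hcan]
      field_simp at hp ⊢
      nlinarith [hp]
    · show p.2 = Real.tanh (d * (Real.arsinh v / d))
      have hdt : d * (Real.arsinh v / d) = Real.arsinh v := by field_simp
      rw [hdt, _root_.tanh_arsinh, hsv, hv]
      field_simp
  · -- limit at +∞
    have hdt : Tendsto (fun t : ℝ => d * t) atTop atTop := tendsto_id.const_mul_atTop hd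
    have hZ : Tendsto (fun t : ℝ => Real.tanh (d * t)) atTop (nhds 1) :=
      tanh_tendsto_atTop'.comp hdt
    have hR : Tendsto (fun t : ℝ => ((d + 1) / (2 * b)) * (Real.cosh (d * t))⁻¹ ^ 2)
        atTop (nhds 0) := by
      have : Tendsto (fun t : ℝ => ((d + 1) / (2 * b)) * (1 - Real.tanh (d * t) ^ 2))
          atTop (nhds (((d + 1) / (2 * b)) * (1 - 1 ^ 2))) :=
        tendsto_const_nhds.mul (tendsto_const_nhds.sub (hZ.pow 2))
      simp only [one_pow, sub_self, mul_zero] at this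
      exact this.congr fun t => by rw [cosh_inv_sq]
    exact hR.prodMk_nhds hZ
  · -- limit at -∞
    have hdt : Tendsto (fun t : ℝ => d * t) atBot atBot := tendsto_id.const_mul_atBot hd
    have hZ : Tendsto (fun t : ℝ => Real.tanh (d * t)) atBot (nhds (-1)) :=
      tanh_tendsto_atBot'.comp hdt
    have hR : Tendsto (fun t : ℝ => ((d + 1) / (2 * b)) * (Real.cosh (d * t))⁻¹ ^ 2)
        atBot (nhds 0) := by
      have : Tendsto (fun t : ℝ => ((d + 1) / (2 * b)) * (1 - Real.tanh (d * t) ^ 2))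
          atBot (nhds (((d + 1) / (2 * b)) * (1 - (-1) ^ 2))) :=
        tendsto_const_nhds.mul (tendsto_const_nhds.sub (hZ.pow 2))
      norm_num at this
      exact this.congr fun t => by rw [cosh_inv_sq]
    exact hR.prodMk_nhds hZ
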